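/- Let (i₁,j₁),…,(i_l,j_l) be pairs of natural numbers with j_h < i_h for each h. Then for all coefficient sequences a, b: D(a (⋆_{i₁,j₁}⋯⋆_{i_l,j_l}) b) = a (⋆_{i₁+1,j₁+1}⋯⋆_{i_l+1,j_l+1}) (D b) + (D a) (⋆_{i₁+1,j₁}⋯⋆_{i_l+1,j_l}⋆_{1,0}) b. -/

import Mathlib

open Finset

/-- The ψ-factorial: ψₙ! = ψ₁ψ₂⋯ψₙ, with ψ₀! = 1. -/
noncomputable def psiFact (ψ : ℕ → ℂ) : ℕ → ℂ
  | 0 => 1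
  | n + 1 => psiFact ψ n * ψ (n + 1)

/-- The ψ-binomial coefficient binomψ(n,k) = ψₙ!/(ψₖ!·ψ_{n−k}!). -/
noncomputable def psiBinom (ψ : ℕ → ℂ) (n k : ℕ) : ℂ :=
  psiFact ψ n / (psiFact ψ k * psiFact ψ (n - k))

/-- The Fontané numbers F(n,k) = (ψₙ − ψₖ)/ψ_{n−k}. -/
noncomputable def Fker (ψ : ℕ → ℂ) (n k : ℕ) : ℂ :=
  (ψ n - ψ k) / ψ (n - k)

/-- The concatenated opposite Fontané product ⋆_{i₁,j₁}⋯⋆_{i_l,j_l} indexed by a list of pairs. -/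
noncomputable def oppFontaneL (ψ : ℕ → ℂ) (L : List (ℕ × ℕ)) (a b : ℕ → ℂ) (n : ℕ) : ℂ :=
  ∑ k ∈ Finset.range (n + 1),
    (L.map fun p => Fker ψ (n + p.1) (n - k + p.2)).prod * psiBinom ψ n k * a k * b (n - k)

/-- The ψ-derivative on coefficient sequences: the shift (D a)ₙ = a_{n+1}. -/
def Dpsi (a : ℕ → ℂ) (n : ℕ) : ℂ := a (n + 1)


lemma psiFact_ne_zero (ψ : ℕ → ℂ) (hψ : ∀ n : ℕ, 1 ≤ n → ψ n ≠ 0) (n : ℕ) :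
    psiFact ψ n ≠ 0 := by
  induction n with
  | zero => simp [psiFact]
  | succ n ih => exact mul_ne_zero ih (hψ (n+1) (by omega))

lemma psiBinom_zero (ψ : ℕ → ℂ) (hψ : ∀ n : ℕ, 1 ≤ n → ψ n ≠ 0) (n : ℕ) :
    psiBinom ψ n 0 = 1 := by
  simp [psiBinom, psiFact, div_self (psiFact_ne_zero ψ hψ n)]

lemma psiBinom_self (ψ : ℕ → ℂ) (hψ : ∀ n : ℕ, 1 ≤ n → ψ n ≠ 0) (n : ℕ) :
    psiBinom ψ n n = 1 := by
  simp [psiBinom, psiFact, div_self (psiFact_ne_zero ψ hψ n)]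

lemma psiBinom_succ_succ (ψ : ℕ → ℂ) (hψ : ∀ n : ℕ, 1 ≤ n → ψ n ≠ 0) {n k : ℕ} (h : k + 1 ≤ n) :
    psiBinom ψ (n+1) (k+1)
      = Fker ψ (n+1) (n-k) * psiBinom ψ n k + psiBinom ψ n (k+1) := by
  obtain ⟨m, rfl⟩ : ∃ m, n = k + 1 + m := ⟨n - (k+1), by omega⟩
  have e1 : k + 1 + m + 1 - (k + 1) = m + 1 := by omega
  have e2 : k + 1 + m - k = m + 1 := by omega
  have e3 : k + 1 + m + 1 - (m + 1) = k + 1 := by omega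
  have e4 : k + 1 + m - (k + 1) = m := by omega
  rw [psiBinom, psiBinom, psiBinom, Fker, e1, e2, e3, e4]
  have hfk := psiFact_ne_zero ψ hψ k
  have hfm := psiFact_ne_zero ψ hψ m
  have hk1 : ψ (k+1) ≠ 0 := hψ _ (by omega)
  have hm1 : ψ (m+1) ≠ 0 := hψ _ (by omega)
  have h1 : psiFact ψ (k+1+m+1) = psiFact ψ (k+1+m) * ψ (k+1+m+1) := rfl
  have h2 : psiFact ψ (k+1) = psiFact ψ k * ψ (k+1) := rfl
  have h3 : psiFact ψ (m+1) = psiFact ψ m * ψ (m+1) := rfl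
  have hfkm := psiFact_ne_zero ψ hψ (k+1+m)
  rw [h1, h2, h3]
  generalize psiFact ψ (k+1+m) = C at *
  generalize psiFact ψ k = A at *
  generalize psiFact ψ m = B at *
  generalize ψ (k+1+m+1) = z at *
  generalize ψ (k+1) = x at *
  generalize ψ (m+1) = y at *
  rw [div_mul_div_comm, div_add_div _ _ (by simp [hk1, hfk, hfm, hm1]) (by simp [hk1, hfk, hfm]),
    div_eq_div_iff (by simp [hk1, hfk, hfm, hm1]) (by simp [hk1, hfk, hfm, hm1])]
  ring

/-- Leibniz rule for the concatenated opposite Fontané products. -/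
theorem Dpsi_oppFontaneL (ψ : ℕ → ℂ) (hψ0 : ψ 0 = 0) (hψ1 : ψ 1 = 1) (hψ : ∀ n : ℕ, 1 ≤ n → ψ n ≠ 0)
    (L : List (ℕ × ℕ)) (hL : ∀ p ∈ L, p.2 < p.1) (a b : ℕ → ℂ) (n : ℕ) :
    Dpsi (oppFontaneL ψ L a b) n
      = oppFontaneL ψ (L.map fun p => (p.1 + 1, p.2 + 1)) a (Dpsi b) n
        + oppFontaneL ψ ((L.map fun p => (p.1 + 1, p.2)) ++ [(1, 0)]) (Dpsi a) b n := by
  have hF := psiFact_ne_zero ψ hψ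
  simp only [Dpsi, oppFontaneL, List.map_append, List.map_map, List.prod_append,
    List.map_cons, List.map_nil, List.prod_cons, List.prod_nil, Function.comp_def, add_zero, mul_one]
  conv_lhs => rw [Finset.sum_range_succ' _ (n+1), Finset.sum_range_succ]
  conv_rhs => rw [Finset.sum_range_succ' _ n]
  conv_rhs => rw [Finset.sum_range_succ]
  have hmid : ∑ x ∈ Finset.range n,
        (List.map (fun p => Fker ψ (n + 1 + p.1) (n + 1 - (x + 1) + p.2)) L).prod * psiBinom ψ (n + 1) (x + 1) *
            a (x + 1) * b (n + 1 - (x + 1))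
      = ∑ x ∈ Finset.range n,
        ((List.map (fun p => Fker ψ (n + (p.1 + 1)) (n - (x + 1) + (p.2 + 1))) L).prod * psiBinom ψ n (x + 1) *
            a (x + 1) * b (n - (x + 1) + 1)
          + (List.map (fun p => Fker ψ (n + (p.1 + 1)) (n - x + p.2)) L).prod * Fker ψ (n + 1) (n - x) *
              psiBinom ψ n x * a (x + 1) * b (n - x)) := by
    refine Finset.sum_congr rfl fun x hx => ?_
    have hxn : x < n := Finset.mem_range.mp hx
    have e1 : n + 1 - (x + 1) = n - x := by omega
    have e2 : n - (x + 1) + 1 = n - x := by omega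
    have hfun : (fun p : ℕ × ℕ => Fker ψ (n + (p.1 + 1)) (n - (x + 1) + (p.2 + 1)))
        = fun p : ℕ × ℕ => Fker ψ (n + 1 + p.1) (n + 1 - (x + 1) + p.2) := by
      funext p; congr 1 <;> omega
    have hfun2 : (fun p : ℕ × ℕ => Fker ψ (n + (p.1 + 1)) (n - x + p.2))
        = fun p : ℕ × ℕ => Fker ψ (n + 1 + p.1) (n + 1 - (x + 1) + p.2) := by
      funext p; congr 1 <;> omega
    rw [hfun, hfun2, e2, e1, psiBinom_succ_succ ψ hψ (by omega : x + 1 ≤ n)]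
    ring
  have hlast : (List.map (fun p => Fker ψ (n + 1 + p.1) (n + 1 - (n + 1) + p.2)) L).prod * psiBinom ψ (n + 1) (n + 1) *
          a (n + 1) * b (n + 1 - (n + 1))
      = (List.map (fun p : ℕ × ℕ => Fker ψ (n + (p.1 + 1)) (n - n + p.2)) L).prod * Fker ψ (n + 1) (n - n) *
          psiBinom ψ n n * a (n + 1) * b (n - n) := by
    have hfun : (fun p : ℕ × ℕ => Fker ψ (n + (p.1 + 1)) (n - n + p.2))
        = fun p : ℕ × ℕ => Fker ψ (n + 1 + p.1) (n + 1 - (n + 1) + p.2) := by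
      funext p; congr 1 <;> omega
    have e1 : n + 1 - (n + 1) = 0 := by omega
    have e2 : n - n = 0 := by omega
    have hFk : Fker ψ (n + 1) 0 = 1 := by
      rw [Fker, hψ0, Nat.sub_zero, sub_zero, div_self (hψ (n + 1) (by omega))]
    rw [hfun, e1, e2, hFk, psiBinom_self ψ hψ, psiBinom_self ψ hψ]
    ring
  have hzero : (List.map (fun p => Fker ψ (n + 1 + p.1) (n + 1 - 0 + p.2)) L).prod * psiBinom ψ (n + 1) 0 * a 0 *
          b (n + 1 - 0)
      = (List.map (fun p : ℕ × ℕ => Fker ψ (n + (p.1 + 1)) (n - 0 + (p.2 + 1))) L).prod * psiBinom ψ n 0 * a 0 *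
          b (n - 0 + 1) := by
    have hfun : (fun p : ℕ × ℕ => Fker ψ (n + (p.1 + 1)) (n - 0 + (p.2 + 1)))
        = fun p : ℕ × ℕ => Fker ψ (n + 1 + p.1) (n + 1 - 0 + p.2) := by
      funext p; congr 1 <;> omega
    have e1 : n - 0 + 1 = n + 1 - 0 := by omega
    rw [hfun, e1, psiBinom_zero ψ hψ, psiBinom_zero ψ hψ]
  rw [hmid, Finset.sum_add_distrib, hlast, hzero]
  ring
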